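/- The maximum prediction deviation is superadditive-compatible via a sorted-sum formula: max_{ỹ ∈ Bias_{l,Δ}(y)} (z·ỹ − z·y) equals the sum of the top-l entries of the vector ρ^+ (where ρ_i^+ = max(z_i δ_i^l, z_i δ_i^u) ≥ 0), and in particular this maximum is a concave, nondecreasing function of l: the marginal gain from increasing l to l+1 is the (l+1)-st largest ρ_i^+, which is nonincreasing in l. -/

import Mathlib

open Matrix Set Finset

/-- The bias set: label vectors differing from `y` in at most `l` coordinates,
with per-coordinate difference in `[δl i, δu i]`. -/
def Bias {n : ℕ} (y δl δu : Fin n → ℝ) (l : ℕ) : Set (Fin n → ℝ) :=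
  {y' | (∀ i, y' i - y i ∈ Set.Icc (δl i) (δu i)) ∧
        (Finset.univ.filter (fun i => y' i ≠ y i)).card ≤ l}

/-- Dot product of two vectors in `ℝ^n`. -/
def dotR {n : ℕ} (z v : Fin n → ℝ) : ℝ := ∑ i, z i * v i

/-- Sum of the `l` largest entries of `ρ`. -/
noncomputable def topSum {n : ℕ} (ρ : Fin n → ℝ) (l : ℕ) : ℝ :=
  (((List.ofFn ρ).mergeSort (· ≥ ·)).take l).sum

/-- The maximal prediction deviation equals the sum of the top-`l` entries of
`ρ⁺`, it is nondecreasing in `l`, the marginal gain from `l` to `l+1` is the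
`(l+1)`-st largest entry, and these marginal gains are nonincreasing. -/

lemma perm_map_lift {α β : Type*} (f : α → β) {m l₁ : List β} (h : m.Perm l₁) :
    ∀ {l₂ : List α}, m = l₂.map f → ∃ l₃ : List α, l₃.Perm l₂ ∧ l₁ = l₃.map f := by
  induction h with
  | nil => intro l₂ h; exact ⟨l₂, List.Perm.refl _, h⟩
  | cons x p ih =>
    intro l₂ h
    cases l₂ with
    | nil => simp at h
    | cons a l₂' =>
      simp only [List.map_cons, List.cons.injEq] at h
      obtain ⟨rfl, h2⟩ := h
      obtain ⟨l₃, hp, he⟩ := ih h2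
      exact ⟨a :: l₃, hp.cons a, by simp [he]⟩
  | swap x y l =>
    intro l₂ h
    match l₂, h with
    | a :: b :: l₂', h =>
      simp only [List.map_cons, List.cons.injEq] at h
      obtain ⟨rfl, rfl, rfl⟩ := h
      exact ⟨b :: a :: l₂', List.Perm.swap a b l₂', by simp⟩
  | trans p q ih₁ ih₂ =>
    intro l₂ h
    obtain ⟨l₃, hp, he⟩ := ih₁ h
    obtain ⟨l₄, hp', he'⟩ := ih₂ he
    exact ⟨l₄, hp'.trans hp, he'⟩

lemma multiset_step {a b : ℝ} {t s : List ℝ}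
    (hab : a ≤ b) (ht : ∀ y ∈ t, y ≤ a)
    (h : (↑(a :: t) : Multiset ℝ) ≤ ↑(b :: s)) : (↑t : Multiset ℝ) ≤ ↑s := by
  rw [Multiset.le_iff_count] at h ⊢
  intro x
  have hx := h x
  rw [show ((a :: t : List ℝ) : Multiset ℝ) = a ::ₘ ↑t from rfl,
      show ((b :: s : List ℝ) : Multiset ℝ) = b ::ₘ ↑s from rfl,
      Multiset.count_cons, Multiset.count_cons] at hx
  by_cases hb : x = b
  · subst hb
    by_cases ha : x = a
    · subst ha; simp [Multiset.coe_count] at hx ⊢; omega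
    · have hxt : x ∉ (↑t : Multiset ℝ) := by
        rw [Multiset.mem_coe]
        intro hmem
        exact ha (le_antisymm (ht x hmem) hab)
      rw [Multiset.count_eq_zero_of_notMem hxt]
      exact Nat.zero_le _
  · by_cases ha : x = a
    · subst ha; simp [Multiset.coe_count, hb] at hx ⊢; omega
    · simp [Multiset.coe_count, ha, hb] at hx ⊢; omega

lemma take_sum_le : ∀ (t s : List ℝ), t.Pairwise (· ≥ ·) → s.Pairwise (· ≥ ·) →
    (∀ x ∈ s, 0 ≤ x) → (↑t : Multiset ℝ) ≤ ↑s → ∀ l, (t.take l).sum ≤ (s.take l).sum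
  | [], s, _, _, hnn, _, l => by
      simp only [List.take_nil, List.sum_nil]
      exact List.sum_nonneg fun x hx => hnn x ((List.take_sublist l s).mem hx)
  | a :: t, [], _, _, _, hle, _ => by
      have := Multiset.card_le_card hle; simp at this
  | a :: t, b :: s, ht, hs, hnn, hle, 0 => by simp
  | a :: t, b :: s, ht, hs, hnn, hle, (l+1) => by
      have hab : a ≤ b := by
        have ha : a ∈ (↑(b :: s) : Multiset ℝ) := Multiset.mem_of_le hle (by simp)
        simp only [Multiset.mem_coe, List.mem_cons] at ha
        rcases ha with rfl | ha
        · exact le_refl a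
        · exact List.rel_of_pairwise_cons hs ha
      have ht' := multiset_step hab (fun y hy => List.rel_of_pairwise_cons ht hy) hle
      have := take_sum_le t s ht.of_cons hs.of_cons (fun x hx => hnn x (by simp [hx])) ht' l
      simp only [List.take_succ_cons, List.sum_cons]
      linarith

theorem stmt16 {n : ℕ} (z y δl δu : Fin n → ℝ)
    (hl : ∀ i, δl i ≤ 0) (hu : ∀ i, 0 ≤ δu i) :
    let ρ : Fin n → ℝ := fun i => max (z i * δl i) (z i * δu i)
    let sorted : List ℝ := (List.ofFn ρ).mergeSort (· ≥ ·)
    (∀ l : ℕ, l ≤ n →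
      IsGreatest ((fun y' => dotR z y' - dotR z y) '' Bias y δl δu l)
        (topSum ρ l)) ∧
    Monotone (topSum ρ) ∧
    (∀ k : ℕ, k < n → topSum ρ (k + 1) = topSum ρ k + sorted.getD k 0) ∧
    (∀ k : ℕ, k + 1 < n → sorted.getD (k + 1) 0 ≤ sorted.getD k 0) := by
  intro ρ sorted
  have hdef : sorted = (List.ofFn ρ).mergeSort (· ≥ ·) := rfl
  have hperm : sorted.Perm (List.ofFn ρ) := List.mergeSort_perm _ _
  have hlen : sorted.length = n := hperm.length_eq.trans List.length_ofFn
  have hsorted : sorted.Pairwise (· ≥ ·) := by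
    have h := List.pairwise_mergeSort (le := fun a b : ℝ => decide (a ≥ b))
      (fun a b c hab hbc => by
        simp only [decide_eq_true_eq] at *; exact le_trans hbc hab)
      (fun a b => by rcases le_total b a with h | h <;> simp [ge_iff_le, h])
      (List.ofFn ρ)
    exact h.imp (fun hd => of_decide_eq_true hd)
  have hρ : ∀ i, 0 ≤ ρ i := fun i => by
    rcases le_or_gt 0 (z i) with h | h
    · exact le_max_of_le_right (mul_nonneg h (hu i))
    · exact le_max_of_le_left (by nlinarith [hl i])
  have hnonneg : ∀ x ∈ sorted, 0 ≤ x := by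
    intro x hx
    have hx2 : x ∈ List.ofFn ρ := hperm.mem_iff.mp hx
    rw [List.mem_ofFn] at hx2
    obtain ⟨i, rfl⟩ := hx2
    exact hρ i
  have hkey : ∀ i d, δl i ≤ d → d ≤ δu i → z i * d ≤ ρ i := fun i d h1 h2 => by
    rcases le_or_gt 0 (z i) with h | h
    · exact le_max_of_le_right (mul_le_mul_of_nonneg_left h2 h)
    · exact le_max_of_le_left (mul_le_mul_of_nonpos_left h1 h.le)
  have hsortcoe : (↑sorted : Multiset ℝ) = Multiset.map ρ (Finset.univ : Finset (Fin n)).val := by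
    rw [Multiset.coe_eq_coe.mpr hperm, List.ofFn_eq_map]
    rfl
  refine ⟨?_, ?_, ?_, ?_⟩
  · -- IsGreatest
    intro l hln
    constructor
    · -- membership
      obtain ⟨is, hisperm, hiseq⟩ := perm_map_lift ρ hperm.symm List.ofFn_eq_map
      have hisnodup : is.Nodup := hisperm.nodup_iff.mpr (List.nodup_finRange n)
      have hislen : is.length = n := hisperm.length_eq.trans List.length_finRange
      set J : List (Fin n) := is.take l with hJ
      have hJnodup : J.Nodup := hisnodup.sublist (List.take_sublist _ _)
      have hJlen : J.length = l := by
        rw [hJ, List.length_take, hislen]; omega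
      set S : Finset (Fin n) := ⟨(↑J : Multiset (Fin n)), Multiset.coe_nodup.mpr hJnodup⟩ with hS
      have hScard : S.card = l := by
        simp only [hS, Finset.card_mk, Multiset.coe_card, hJlen]
      set ch : Fin n → ℝ := fun i => if z i * δu i ≤ z i * δl i then δl i else δu i with hch
      have hch2 : ∀ i, z i * ch i = ρ i := fun i => by
        rw [hch]
        by_cases h : z i * δu i ≤ z i * δl i
        · simp only [h, if_true]; exact (max_eq_left h).symm
        · simp only [h, if_false]; exact (max_eq_right (le_of_not_ge h)).symm
      refine ⟨fun i => y i + if i ∈ S then ch i else 0, ⟨?_, ?_⟩, ?_⟩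
      · intro i
        simp only [add_sub_cancel_left]
        by_cases h : i ∈ S
        · simp only [h, if_true, hch]
          by_cases h2 : z i * δu i ≤ z i * δl i
          · simp only [h2, if_true]
            exact ⟨le_refl _, (hl i).trans (hu i)⟩
          · simp only [h2, if_false]
            exact ⟨(hl i).trans (hu i), le_refl _⟩
        · simp only [h, if_false]
          exact ⟨hl i, hu i⟩
      · calc (Finset.univ.filter (fun i => (y i + if i ∈ S then ch i else 0) ≠ y i)).card
            ≤ S.card := by
              apply Finset.card_le_card
              intro i hi
              simp only [Finset.mem_filter] at hi
              by_contra h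
              simp [h] at hi
          _ ≤ l := le_of_eq hScard
      · have hstep : dotR z (fun i => y i + if i ∈ S then ch i else 0) - dotR z y
            = ∑ i ∈ S, ρ i := by
          rw [dotR, dotR, ← Finset.sum_sub_distrib]
          rw [show ∀ (f : Fin n → ℝ), ∑ i, f i = ∑ i, f i from fun _ => rfl]
          calc ∑ i, (z i * (y i + if i ∈ S then ch i else 0) - z i * y i)
              = ∑ i, (if i ∈ S then z i * ch i else 0) := by
                apply Finset.sum_congr rfl
                intro i _
                by_cases h : i ∈ S <;> simp [h] <;> ring
            _ = ∑ i ∈ Finset.univ ∩ S, z i * ch i := Finset.sum_ite_mem _ _ _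
            _ = ∑ i ∈ S, z i * ch i := by rw [Finset.univ_inter]
            _ = ∑ i ∈ S, ρ i := Finset.sum_congr rfl (fun i _ => hch2 i)
        show dotR z (fun i => y i + if i ∈ S then ch i else 0) - dotR z y = topSum ρ l
        rw [hstep]
        have : ∑ i ∈ S, ρ i = ((J.map ρ).sum) := by
          rw [Finset.sum]
          simp only [hS]
          rw [show Multiset.map ρ (↑J : Multiset (Fin n)) = ↑(J.map ρ) from rfl]
          rfl
        rw [this, topSum, ← hdef, hiseq, hJ, ← List.map_take]
    · -- upper bound
      rintro v ⟨y', ⟨hy1, hy2⟩, rfl⟩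
      have hval : dotR z y' - dotR z y = ∑ i, z i * (y' i - y i) := by
        rw [dotR, dotR, ← Finset.sum_sub_distrib]
        exact Finset.sum_congr rfl (fun i _ => by ring)
      set T : Finset (Fin n) := Finset.univ.filter (fun i => y' i ≠ y i) with hT
      have hfil : ∑ i ∈ T, z i * (y' i - y i) = ∑ i, z i * (y' i - y i) := by
        apply Finset.sum_filter_of_ne
        intro i _ hne
        intro heq
        apply hne
        rw [heq, sub_self, mul_zero]
      have h1 : ∑ i ∈ T, z i * (y' i - y i) ≤ ∑ i ∈ T, ρ i :=
        Finset.sum_le_sum (fun i _ => hkey i _ (hy1 i).1 (hy1 i).2)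
      set t : List ℝ := Multiset.sort (Multiset.map ρ T.val) (· ≥ ·) with ht
      have htsorted : t.Pairwise (· ≥ ·) := Multiset.pairwise_sort _ _
      have htcoe : (↑t : Multiset ℝ) = Multiset.map ρ T.val := Multiset.sort_eq _ _
      have htle : (↑t : Multiset ℝ) ≤ ↑sorted := by
        rw [htcoe, hsortcoe]
        exact Multiset.map_le_map (Finset.val_le_iff.mpr (Finset.subset_univ T))
      have htlen : t.length ≤ l := by
        have : t.length = T.card := by
          rw [← Multiset.coe_card, htcoe, Multiset.card_map]; rfl
        rw [this]; exact hy2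
      have h2 : t.sum ≤ (sorted.take l).sum := by
        have := take_sum_le t sorted htsorted hsorted hnonneg htle l
        rwa [List.take_of_length_le htlen] at this
      have h3 : ∑ i ∈ T, ρ i = t.sum := by
        rw [Finset.sum, ← htcoe]
        rfl
      rw [topSum, ← hdef]
      calc dotR z y' - dotR z y = ∑ i ∈ T, z i * (y' i - y i) := by rw [hval, hfil]
        _ ≤ ∑ i ∈ T, ρ i := h1
        _ = t.sum := h3
        _ ≤ (sorted.take l).sum := h2
  · -- Monotone
    apply monotone_nat_of_le_succ
    intro l
    by_cases h : l < sorted.length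
    · rw [topSum, topSum, ← hdef, List.sum_take_succ _ _ h]
      have := hnonneg _ (List.getElem_mem h)
      linarith
    · push_neg at h
      rw [topSum, topSum, ← hdef, List.take_of_length_le h,
        List.take_of_length_le (h.trans (Nat.le_succ l))]
  · intro k hk
    have hk' : k < sorted.length := by rw [hlen]; exact hk
    rw [topSum, topSum, ← hdef, List.sum_take_succ _ _ hk', List.getD_eq_getElem _ _ hk']
  · intro k hk
    have h1 : k + 1 < sorted.length := by rw [hlen]; exact hk
    have h0 : k < sorted.length := Nat.lt_of_succ_lt h1
    rw [List.getD_eq_getElem _ _ h1, List.getD_eq_getElem _ _ h0]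
    have := List.pairwise_iff_get.mp hsorted ⟨k, h0⟩ ⟨k + 1, h1⟩ (by simp)
    simpa using this
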